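/- Let T be a positively edge-weighted phylogenetic X-tree with |X| = n, let 2 ≤ m ≤ n, let D be the m-subtree weight map of T, and let S_D(i,j) = Σ D({i,j} ∪ Y), the sum over all (m−2)-element subsets Y of X \ {i,j}. Let (a1,a2;a3,a4) be four distinct leaves such that the path from a1 to a2 and the path from a3 to a4 are vertex-disjoint, and suppose every edge of the smallest subtree of T containing {a1,a2,a3,a4} belongs to T_{≤ n−m}. Then S_D(a1,a2) + S_D(a3,a4) < S_D(a1,a3) + S_D(a2,a4). -/

import Mathlib

open SimpleGraph Finset

attribute [local instance] Classical.propDecidable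

noncomputable section

/-- `e` lies on some path (hence on the unique path, in a tree) from `a` to `b`. -/
def OnPath {V : Type*} (G : SimpleGraph V) (a b : V) (e : Sym2 V) : Prop :=
  ∃ p : G.Walk a b, p.IsPath ∧ e ∈ p.edges

/-- The edge set `[R]` of the smallest subtree of a tree `G` spanning `R`. -/
def subtreeEdges {V : Type*} [Fintype V] (G : SimpleGraph V) (R : Finset V) :
    Finset (Sym2 V) :=
  G.edgeFinset.filter fun e => ∃ a ∈ R, ∃ b ∈ R, OnPath G a b e

/-- The subtree weight `D(R) = ∑_{e ∈ [R]} w(e)`. -/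
def subtreeWeight {V : Type*} [Fintype V] (G : SimpleGraph V) (w : Sym2 V → ℝ)
    (R : Finset V) : ℝ :=
  ∑ e ∈ subtreeEdges G R, w e

/-- `L_i(e)`: the set of leaves in the component of `T - e` containing `i`. -/
def leafSide {V : Type*} [Fintype V] (G : SimpleGraph V) (X : Finset V)
    (i : V) (e : Sym2 V) : Finset V :=
  X.filter fun x => (G.deleteEdges {e}).Reachable i x

/-- `S_D(i,j) = ∑_{Y ∈ C(X \ {i,j}, m-2)} D({i,j} ∪ Y)`. -/
def SDmap {V : Type*} [Fintype V] (G : SimpleGraph V) (w : Sym2 V → ℝ)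
    (X : Finset V) (m : ℕ) (i j : V) : ℝ :=
  ∑ Y ∈ ((X.erase i).erase j).powersetCard (m - 2),
    subtreeWeight G w (insert i (insert j Y))

/-- Binomial coefficient with integer arguments, `0` whenever `b < 0` or `a < b`. -/
def C (a b : ℤ) : ℤ := if 0 ≤ b ∧ b ≤ a then (a.toNat.choose b.toNat : ℤ) else 0

/-- `(i,j;k,l)` is a tree quartet: the (unique) path from `i` to `j` and the (unique) path
from `k` to `l` share no edges. -/
def IsQuartet {V : Type*} (G : SimpleGraph V) (i j k l : V) : Prop :=
  ∀ (p : G.Walk i j) (q : G.Walk k l), p.IsPath → q.IsPath →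
    ∀ e ∈ p.edges, e ∉ q.edges

section Aux

variable {V : Type*}

/-- After deleting the edge `s(u,v)`, every vertex is still reachable from `u` or from `v`. -/
lemma reach_delete_aux {G : SimpleGraph V} {u v : V} :
    ∀ {x y : V} (p : G.Walk x y), (G.deleteEdges {s(u, v)}).Reachable u y →
      (G.deleteEdges {s(u, v)}).Reachable u x ∨ (G.deleteEdges {s(u, v)}).Reachable v x := by
  intro x y p
  induction p with
  | nil => exact fun h => Or.inl h
  | @cons a b c h p ih =>
    intro hy
    by_cases he : s(a, b) = s(u, v)
    · rcases Sym2.eq_iff.mp he with ⟨rfl, rfl⟩ | ⟨rfl, rfl⟩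
      · exact Or.inl (Reachable.refl _)
      · exact Or.inr (Reachable.refl _)
    · have hadj : (G.deleteEdges {s(u, v)}).Adj a b := by
        rw [SimpleGraph.deleteEdges_adj]
        exact ⟨h, by simpa using he⟩
      rcases ih hy with h' | h'
      · exact Or.inl (h'.trans hadj.reachable.symm)
      · exact Or.inr (h'.trans hadj.reachable.symm)

lemma reach_delete_endpoint {G : SimpleGraph V} (hpc : G.Preconnected) (u v x : V) :
    (G.deleteEdges {s(u, v)}).Reachable u x ∨ (G.deleteEdges {s(u, v)}).Reachable v x := by
  obtain ⟨p⟩ := hpc x u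
  exact reach_delete_aux p (Reachable.refl _)

/-- In a tree, deleting an edge disconnects its endpoints. -/
lemma not_reach_delete {G : SimpleGraph V} (hT : G.IsTree) {u v : V} (hadj : G.Adj u v) :
    ¬ (G.deleteEdges {s(u, v)}).Reachable u v := by
  rintro ⟨q⟩
  have hq : ∀ f ∈ q.edges, f ∈ G.edgeSet := fun f hf => by
    have := q.edges_subset_edgeSet hf
    rw [edgeSet_deleteEdges] at this
    exact this.1
  have hne : s(u, v) ∉ (q.transfer G hq).edges := by
    rw [Walk.edges_transfer]
    intro hmem
    have := q.edges_subset_edgeSet hmem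
    rw [edgeSet_deleteEdges] at this
    exact this.2 rfl
  have h1 : ((q.transfer G hq).toPath : G.Walk u v).IsPath := (q.transfer G hq).toPath.2
  have h2 : (Walk.cons hadj Walk.nil : G.Walk u v).IsPath := by
    rw [Walk.cons_isPath_iff]
    exact ⟨Walk.IsPath.nil, by simp [hadj.ne]⟩
  have heq := (hT.existsUnique_path u v).unique h2 h1
  have hmem : s(u, v) ∈ ((q.transfer G hq).toPath : G.Walk u v).edges := by
    rw [← heq]; simp
  exact hne (Walk.edges_toPath_subset _ hmem)

/-- A walk avoiding `e` survives the deletion of `e`. -/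
lemma reach_of_not_mem_edges {G : SimpleGraph V} {a b : V} (p : G.Walk a b) {e : Sym2 V}
    (h : e ∉ p.edges) : (G.deleteEdges {e}).Reachable a b :=
  ⟨Walk.toDeleteEdge e p h⟩

/-- In a tree, an edge on a path separates its endpoints. -/
lemma sep_of_mem_edges {G : SimpleGraph V} (hT : G.IsTree) {a b : V} {p : G.Walk a b}
    (hp : p.IsPath) {e : Sym2 V} (he : e ∈ p.edges) :
    ¬ (G.deleteEdges {e}).Reachable a b := by
  rintro ⟨q⟩
  have hq : ∀ f ∈ q.edges, f ∈ G.edgeSet := fun f hf => by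
    have := q.edges_subset_edgeSet hf
    rw [edgeSet_deleteEdges] at this
    exact this.1
  have hne : e ∉ (q.transfer G hq).edges := by
    rw [Walk.edges_transfer]
    intro hmem
    have := q.edges_subset_edgeSet hmem
    rw [edgeSet_deleteEdges] at this
    exact this.2 rfl
  have h1 : ((q.transfer G hq).toPath : G.Walk a b).IsPath := (q.transfer G hq).toPath.2
  have heq := (hT.existsUnique_path a b).unique hp h1
  exact hne (Walk.edges_toPath_subset _ (heq ▸ he))

lemma onPath_iff_sep {G : SimpleGraph V} (hT : G.IsTree) (a b : V) (e : Sym2 V) :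
    OnPath G a b e ↔ ¬ (G.deleteEdges {e}).Reachable a b := by
  constructor
  · rintro ⟨p, hp, he⟩
    exact sep_of_mem_edges hT hp he
  · intro hsep
    obtain ⟨q⟩ := hT.isConnected.preconnected a b
    refine ⟨q.toPath, q.toPath.2, ?_⟩
    by_contra h
    exact hsep (reach_of_not_mem_edges _ h)

lemma reach_delete_v_iff {G : SimpleGraph V} (hT : G.IsTree) {u v : V} (hadj : G.Adj u v)
    (x : V) : (G.deleteEdges {s(u, v)}).Reachable v x ↔
      ¬ (G.deleteEdges {s(u, v)}).Reachable u x := by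
  constructor
  · intro h h'
    exact not_reach_delete hT hadj (h'.trans h.symm)
  · intro h
    exact (reach_delete_endpoint hT.isConnected.preconnected u v x).resolve_left h

lemma pred_iff {G : SimpleGraph V} (hT : G.IsTree) {u v : V} (hadj : G.Adj u v) (R : Finset V) :
    (∃ a ∈ R, ∃ b ∈ R, OnPath G a b s(u, v)) ↔
      ((∃ a ∈ R, (G.deleteEdges {s(u, v)}).Reachable u a) ∧
       (∃ b ∈ R, (G.deleteEdges {s(u, v)}).Reachable v b)) := by
  have hpc := hT.isConnected.preconnected
  constructor
  · rintro ⟨a, ha, b, hb, hab⟩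
    rw [onPath_iff_sep hT] at hab
    rcases reach_delete_endpoint hpc u v a with hua | hva
    · rcases reach_delete_endpoint hpc u v b with hub | hvb
      · exact absurd (hua.symm.trans hub) hab
      · exact ⟨⟨a, ha, hua⟩, ⟨b, hb, hvb⟩⟩
    · rcases reach_delete_endpoint hpc u v b with hub | hvb
      · exact ⟨⟨b, hb, hub⟩, ⟨a, ha, hva⟩⟩
      · exact absurd (hva.symm.trans hvb) hab
  · rintro ⟨⟨a, ha, hua⟩, ⟨b, hb, hvb⟩⟩
    refine ⟨a, ha, b, hb, ?_⟩
    rw [onPath_iff_sep hT]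
    intro hr
    exact not_reach_delete hT hadj (hua.trans (hr.trans hvb.symm))

lemma ite_core {p1 p2 p3 p4 q r : Prop}
    [Decidable ((p1 ∨ p2 ∨ q) ∧ (¬p1 ∨ ¬p2 ∨ r))]
    [Decidable ((p3 ∨ p4 ∨ q) ∧ (¬p3 ∨ ¬p4 ∨ r))]
    [Decidable ((p1 ∨ p3 ∨ q) ∧ (¬p1 ∨ ¬p3 ∨ r))]
    [Decidable ((p2 ∨ p4 ∨ q) ∧ (¬p2 ∨ ¬p4 ∨ r))]
    (hK : (p1 ↔ p2) ∨ (p3 ↔ p4)) {c : ℝ} (hc : 0 ≤ c) :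
    ((if (p1 ∨ p2 ∨ q) ∧ (¬p1 ∨ ¬p2 ∨ r) then c else 0)
      + (if (p3 ∨ p4 ∨ q) ∧ (¬p3 ∨ ¬p4 ∨ r) then c else 0))
    ≤ ((if (p1 ∨ p3 ∨ q) ∧ (¬p1 ∨ ¬p3 ∨ r) then c else 0)
      + (if (p2 ∨ p4 ∨ q) ∧ (¬p2 ∨ ¬p4 ∨ r) then c else 0)) := by
  by_cases h1 : p1 <;> by_cases h2 : p2 <;> by_cases h3 : p3 <;> by_cases h4 : p4 <;>
    by_cases hq : q <;> by_cases hr : r <;>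
    simp_all <;> linarith

lemma indicator_split (x : ℝ) (b1 b2 b3 b4 : Prop)
    [Decidable (b1 ∧ b3)] [Decidable (b2 ∧ b4)] [Decidable (b1 ∧ b2)] [Decidable (b3 ∧ b4)]
    [Decidable (b1 ∧ b3 ∧ ¬b2 ∧ ¬b4)] [Decidable (b2 ∧ b4 ∧ ¬b1 ∧ ¬b3)]
    [Decidable (b1 ∧ b2 ∧ ¬b3 ∧ ¬b4)] [Decidable (b3 ∧ b4 ∧ ¬b1 ∧ ¬b2)] :
    ((if b1 ∧ b3 then x else 0) + (if b2 ∧ b4 then x else 0))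
      - (if b1 ∧ b2 then x else 0) - (if b3 ∧ b4 then x else 0)
    = ((if b1 ∧ b3 ∧ ¬b2 ∧ ¬b4 then x else 0) + (if b2 ∧ b4 ∧ ¬b1 ∧ ¬b3 then x else 0))
      - (if b1 ∧ b2 ∧ ¬b3 ∧ ¬b4 then x else 0) - (if b3 ∧ b4 ∧ ¬b1 ∧ ¬b2 then x else 0) := by
  by_cases h1 : b1 <;> by_cases h2 : b2 <;> by_cases h3 : b3 <;> by_cases h4 : b4 <;>
    simp_all <;> ring

lemma walk_cross {G : SimpleGraph V} {c d e f t : V} (p : G.Walk c d) (q : G.Walk e f) :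
    ∀ {x : V} (r : G.Walk x t), t ∈ q.support →
      (∀ g ∈ r.edges, g ∈ p.edges ∨ g ∈ q.edges) → x ∈ p.support →
      ∃ y, y ∈ p.support ∧ y ∈ q.support := by
  intro x r
  induction r with
  | nil => exact fun ht _ hx => ⟨_, hx, ht⟩
  | @cons a b c h r ih =>
    intro ht hg hx
    rcases hg s(a, b) (by rw [Walk.edges_cons]; exact List.mem_cons_self) with h1 | h2
    · exact ih ht (fun g hgg => hg g (by rw [Walk.edges_cons]; exact List.mem_cons_of_mem _ hgg))
        (p.snd_mem_support_of_mem_edges h1)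
    · exact ⟨a, hx, q.fst_mem_support_of_mem_edges h2⟩

lemma sum_pair_reindex (F : Finset V → ℝ) (X : Finset V) (m : ℕ) (hm : 2 ≤ m)
    {i j : V} (hi : i ∈ X) (hj : j ∈ X) (hij : i ≠ j) :
    ∑ Y ∈ ((X.erase i).erase j).powersetCard (m - 2), F (insert i (insert j Y))
      = ∑ R ∈ (X.powersetCard m).filter (fun R => i ∈ R ∧ j ∈ R), F R := by
  refine Finset.sum_nbij' (fun Y => insert i (insert j Y)) (fun R => (R.erase i).erase j)
    ?_ ?_ ?_ ?_ ?_
  · intro Y hY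
    rw [Finset.mem_powersetCard] at hY
    obtain ⟨hsub, hcard⟩ := hY
    have hjY : j ∉ Y := fun h => (Finset.mem_erase.mp (hsub h)).1 rfl
    have hiY : i ∉ Y := fun h => (Finset.mem_erase.mp ((Finset.mem_erase.mp (hsub h)).2)).1 rfl
    rw [Finset.mem_filter, Finset.mem_powersetCard]
    refine ⟨⟨?_, ?_⟩, Finset.mem_insert_self _ _,
      Finset.mem_insert_of_mem (Finset.mem_insert_self _ _)⟩
    · intro z hz
      rcases Finset.mem_insert.mp hz with rfl | hz
      · exact hi
      rcases Finset.mem_insert.mp hz with rfl | hz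
      · exact hj
      · exact Finset.mem_of_mem_erase (Finset.mem_of_mem_erase (hsub hz))
    · rw [Finset.card_insert_of_notMem
        (by rw [Finset.mem_insert]; push_neg; exact ⟨hij, hiY⟩),
        Finset.card_insert_of_notMem hjY, hcard]
      omega
  · intro R hR
    rw [Finset.mem_filter, Finset.mem_powersetCard] at hR
    obtain ⟨⟨hsub, hcard⟩, hiR, hjR⟩ := hR
    rw [Finset.mem_powersetCard]
    constructor
    · intro z hz
      rw [Finset.mem_erase] at hz
      obtain ⟨hzj, hz⟩ := hz
      rw [Finset.mem_erase] at hz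
      obtain ⟨hzi, hz⟩ := hz
      exact Finset.mem_erase.mpr ⟨hzj, Finset.mem_erase.mpr ⟨hzi, hsub hz⟩⟩
    · rw [Finset.card_erase_of_mem (Finset.mem_erase.mpr ⟨Ne.symm hij, hjR⟩),
        Finset.card_erase_of_mem hiR, hcard]
      omega
  · intro Y hY
    rw [Finset.mem_powersetCard] at hY
    obtain ⟨hsub, _⟩ := hY
    have hjY : j ∉ Y := fun h => (Finset.mem_erase.mp (hsub h)).1 rfl
    have hiY : i ∉ Y := fun h => (Finset.mem_erase.mp ((Finset.mem_erase.mp (hsub h)).2)).1 rfl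
    rw [Finset.erase_insert (by rw [Finset.mem_insert]; push_neg; exact ⟨hij, hiY⟩),
      Finset.erase_insert hjY]
  · intro R hR
    rw [Finset.mem_filter, Finset.mem_powersetCard] at hR
    obtain ⟨⟨_, _⟩, hiR, hjR⟩ := hR
    rw [Finset.insert_erase (Finset.mem_erase.mpr ⟨Ne.symm hij, hjR⟩), Finset.insert_erase hiR]
  · exact fun Y _ => rfl

lemma sum_trace_reindex (F : Finset V → ℝ) (X : Finset V) (m : ℕ) (hm : 2 ≤ m)
    {i j k l : V} (hi : i ∈ X) (hj : j ∈ X) (hij : i ≠ j) (hki : k ≠ i) (hkj : k ≠ j)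
    (hli : l ≠ i) (hlj : l ≠ j) :
    ∑ R ∈ (X.powersetCard m).filter (fun R => i ∈ R ∧ j ∈ R ∧ k ∉ R ∧ l ∉ R), F R
      = ∑ Z ∈ (X \ {i, j, k, l}).powersetCard (m - 2), F (insert i (insert j Z)) := by
  refine (Finset.sum_nbij' (fun Z => insert i (insert j Z)) (fun R => (R.erase i).erase j)
    ?_ ?_ ?_ ?_ ?_).symm
  · intro Z hZ
    rw [Finset.mem_powersetCard] at hZ
    obtain ⟨hsub, hcard⟩ := hZ
    have hnot : ∀ z ∈ Z, z ≠ i ∧ z ≠ j ∧ z ≠ k ∧ z ≠ l := by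
      intro z hz
      have := hsub hz
      rw [Finset.mem_sdiff] at this
      have h2 := this.2
      simp only [Finset.mem_insert, Finset.mem_singleton] at h2
      push_neg at h2
      exact h2
    have hiZ : i ∉ Z := fun h => (hnot i h).1 rfl
    have hjZ : j ∉ Z := fun h => (hnot j h).2.1 rfl
    rw [Finset.mem_filter, Finset.mem_powersetCard]
    refine ⟨⟨?_, ?_⟩, Finset.mem_insert_self _ _,
      Finset.mem_insert_of_mem (Finset.mem_insert_self _ _), ?_, ?_⟩
    · intro z hz
      rcases Finset.mem_insert.mp hz with rfl | hz
      · exact hi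
      rcases Finset.mem_insert.mp hz with rfl | hz
      · exact hj
      · exact (Finset.mem_sdiff.mp (hsub hz)).1
    · rw [Finset.card_insert_of_notMem
        (by rw [Finset.mem_insert]; push_neg; exact ⟨hij, hiZ⟩),
        Finset.card_insert_of_notMem hjZ, hcard]
      omega
    · intro hk
      rcases Finset.mem_insert.mp hk with h | hk
      · exact hki h
      rcases Finset.mem_insert.mp hk with h | hk
      · exact hkj h
      · exact (hnot k hk).2.2.1 rfl
    · intro hl
      rcases Finset.mem_insert.mp hl with h | hl
      · exact hli h
      rcases Finset.mem_insert.mp hl with h | hl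
      · exact hlj h
      · exact (hnot l hl).2.2.2 rfl
  · intro R hR
    rw [Finset.mem_filter, Finset.mem_powersetCard] at hR
    obtain ⟨⟨hsub, hcard⟩, hiR, hjR, hkR, hlR⟩ := hR
    rw [Finset.mem_powersetCard]
    constructor
    · intro z hz
      rw [Finset.mem_erase] at hz
      obtain ⟨hzj, hz⟩ := hz
      rw [Finset.mem_erase] at hz
      obtain ⟨hzi, hz⟩ := hz
      rw [Finset.mem_sdiff]
      refine ⟨hsub hz, ?_⟩
      simp only [Finset.mem_insert, Finset.mem_singleton]
      push_neg
      exact ⟨hzi, hzj, fun h => hkR (h ▸ hz), fun h => hlR (h ▸ hz)⟩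
    · rw [Finset.card_erase_of_mem (Finset.mem_erase.mpr ⟨Ne.symm hij, hjR⟩),
        Finset.card_erase_of_mem hiR, hcard]
      omega
  · intro Z hZ
    rw [Finset.mem_powersetCard] at hZ
    obtain ⟨hsub, _⟩ := hZ
    have hiZ : i ∉ Z := fun h => by
      have := Finset.mem_sdiff.mp (hsub h)
      exact this.2 (by simp)
    have hjZ : j ∉ Z := fun h => by
      have := Finset.mem_sdiff.mp (hsub h)
      exact this.2 (by simp)
    rw [Finset.erase_insert (by rw [Finset.mem_insert]; push_neg; exact ⟨hij, hiZ⟩),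
      Finset.erase_insert hjZ]
  · intro R hR
    rw [Finset.mem_filter, Finset.mem_powersetCard] at hR
    obtain ⟨⟨_, _⟩, hiR, hjR, _, _⟩ := hR
    rw [Finset.insert_erase (Finset.mem_erase.mpr ⟨Ne.symm hij, hjR⟩), Finset.insert_erase hiR]
  · exact fun Z _ => rfl

lemma SDmap_eq [Fintype V] (G : SimpleGraph V) (w : Sym2 V → ℝ) (X : Finset V)
    (m : ℕ) (hm : 2 ≤ m) {i j : V} (hi : i ∈ X) (hj : j ∈ X) (hij : i ≠ j) :
    SDmap G w X m i j
      = ∑ R ∈ (X.powersetCard m).filter (fun R => i ∈ R ∧ j ∈ R), subtreeWeight G w R :=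
  sum_pair_reindex (subtreeWeight G w) X m hm hi hj hij

end Aux

set_option maxHeartbeats 4000000 in
/-- for a quartet whose spanning subtree lies in `T_{≤ n-m}`,
the `S_D`-four-point inequality is strict:
`S_D(a1,a2) + S_D(a3,a4) < S_D(a1,a3) + S_D(a2,a4)`. -/
theorem SD_strict_quartet_inequality
    {V : Type*} [Fintype V] (G : SimpleGraph V) (X : Finset V)
    (hT : G.IsTree)
    (hleaf : ∀ v : V, G.degree v = 1 ↔ v ∈ X)
    (hint : ∀ v : V, v ∉ X → 3 ≤ G.degree v)
    (w : Sym2 V → ℝ) (hw : ∀ e ∈ G.edgeSet, 0 < w e)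
    (m : ℕ) (hm : 2 ≤ m) (hmn : m ≤ X.card)
    (a1 a2 a3 a4 : V) (h1 : a1 ∈ X) (h2 : a2 ∈ X) (h3 : a3 ∈ X) (h4 : a4 ∈ X)
    (h12 : a1 ≠ a2) (h13 : a1 ≠ a3) (h14 : a1 ≠ a4)
    (h23 : a2 ≠ a3) (h24 : a2 ≠ a4) (h34 : a3 ≠ a4)
    -- the path from `a1` to `a2` and the path from `a3` to `a4` are vertex-disjoint
    (hdisj : ∀ (p : G.Walk a1 a2) (q : G.Walk a3 a4), p.IsPath → q.IsPath →
      ∀ v ∈ p.support, v ∉ q.support)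
    -- every edge of the subtree spanning `{a1,a2,a3,a4}` lies in `T_{≤ n-m}`:
    -- its removal leaves a component with at most `n - m` leaves
    (hsmall : ∀ e ∈ subtreeEdges G {a1, a2, a3, a4},
      ∃ v, v ∈ e ∧ (leafSide G X v e).card ≤ X.card - m) :
    SDmap G w X m a1 a2 + SDmap G w X m a3 a4 <
      SDmap G w X m a1 a3 + SDmap G w X m a2 a4 := by
  have hpc : G.Preconnected := hT.isConnected.preconnected
  obtain ⟨w12'⟩ := hpc a1 a2
  obtain ⟨w34'⟩ := hpc a3 a4
  obtain ⟨w13'⟩ := hpc a1 a3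
  let p12 : G.Walk a1 a2 := (w12'.toPath : G.Walk a1 a2)
  have hp12 : p12.IsPath := w12'.toPath.2
  let p34 : G.Walk a3 a4 := (w34'.toPath : G.Walk a3 a4)
  have hp34 : p34.IsPath := w34'.toPath.2
  let p13 : G.Walk a1 a3 := (w13'.toPath : G.Walk a1 a3)
  have hp13 : p13.IsPath := w13'.toPath.2
  -- the quartet condition: no edge separates both pairs simultaneously
  have hK : ∀ u v : V, G.Adj u v →
      ((G.deleteEdges {s(u, v)}).Reachable a1 a2 ∨ (G.deleteEdges {s(u, v)}).Reachable a3 a4) := by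
    intro u v _
    by_contra hcon
    push_neg at hcon
    have he12 : s(u, v) ∈ p12.edges := by
      by_contra h
      exact hcon.1 (reach_of_not_mem_edges p12 h)
    have he34 : s(u, v) ∈ p34.edges := by
      by_contra h
      exact hcon.2 (reach_of_not_mem_edges p34 h)
    exact hdisj p12 p34 hp12 hp34 u (p12.fst_mem_support_of_mem_edges he12)
      (p34.fst_mem_support_of_mem_edges he34)
  -- per-edge inequality
  have hedge_le : ∀ (Z : Finset V) (e : Sym2 V), e ∈ G.edgeFinset →
      ((if (∃ a ∈ insert a1 (insert a2 Z), ∃ b ∈ insert a1 (insert a2 Z), OnPath G a b e)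
          then w e else 0)
        + (if (∃ a ∈ insert a3 (insert a4 Z), ∃ b ∈ insert a3 (insert a4 Z), OnPath G a b e)
          then w e else 0))
      ≤ ((if (∃ a ∈ insert a1 (insert a3 Z), ∃ b ∈ insert a1 (insert a3 Z), OnPath G a b e)
          then w e else 0)
        + (if (∃ a ∈ insert a2 (insert a4 Z), ∃ b ∈ insert a2 (insert a4 Z), OnPath G a b e)
          then w e else 0)) := by
    intro Z e
    induction e using Sym2.ind with
    | _ u v =>
      intro he
      have hes : s(u, v) ∈ G.edgeSet := mem_edgeFinset.mp he
      have hadj : G.Adj u v := G.mem_edgeSet.mp hes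
      have hvn : ∀ x : V, (G.deleteEdges {s(u, v)}).Reachable v x ↔
          ¬ (G.deleteEdges {s(u, v)}).Reachable u x := reach_delete_v_iff hT hadj
      have hK' : ((G.deleteEdges {s(u, v)}).Reachable u a1 ↔
            (G.deleteEdges {s(u, v)}).Reachable u a2)
          ∨ ((G.deleteEdges {s(u, v)}).Reachable u a3 ↔
            (G.deleteEdges {s(u, v)}).Reachable u a4) := by
        rcases hK u v hadj with h | h
        · exact Or.inl ⟨fun h' => h'.trans h, fun h' => h'.trans h.symm⟩
        · exact Or.inr ⟨fun h' => h'.trans h, fun h' => h'.trans h.symm⟩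
      simp only [pred_iff hT hadj]
      simp only [Finset.exists_mem_insert, hvn]
      exact ite_core hK' (le_of_lt (hw _ hes))
  have hD : ∀ R : Finset V, subtreeWeight G w R
      = ∑ e ∈ G.edgeFinset, if (∃ a ∈ R, ∃ b ∈ R, OnPath G a b e) then w e else 0 := by
    intro R
    unfold subtreeWeight subtreeEdges
    rw [Finset.sum_filter]
  have hZle : ∀ Z : Finset V,
      subtreeWeight G w (insert a1 (insert a2 Z)) + subtreeWeight G w (insert a3 (insert a4 Z))
      ≤ subtreeWeight G w (insert a1 (insert a3 Z))
        + subtreeWeight G w (insert a2 (insert a4 Z)) := by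
    intro Z
    rw [hD, hD, hD, hD, ← Finset.sum_add_distrib, ← Finset.sum_add_distrib]
    exact Finset.sum_le_sum fun e he => hedge_le Z e he
  -- the middle edge
  obtain ⟨e₀, he13, he12, he34⟩ : ∃ e ∈ p13.edges, e ∉ p12.edges ∧ e ∉ p34.edges := by
    by_contra hcon
    push_neg at hcon
    obtain ⟨y, hy1, hy2⟩ := walk_cross p12 p34 p13 p34.start_mem_support
      (fun g hg => or_iff_not_imp_left.mpr (hcon g hg)) p12.start_mem_support
    exact hdisj p12 p34 hp12 hp34 y hy1 hy2
  have he0set : e₀ ∈ G.edgeSet := p13.edges_subset_edgeSet he13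
  obtain ⟨u, v, rfl⟩ : ∃ u v : V, e₀ = s(u, v) :=
    Sym2.ind (f := fun s => ∃ u v : V, s = s(u, v)) (fun x y => ⟨x, y, rfl⟩) e₀
  have hadj : G.Adj u v := G.mem_edgeSet.mp he0set
  have hsep13 : ¬ (G.deleteEdges {s(u, v)}).Reachable a1 a3 := sep_of_mem_edges hT hp13 he13
  have hr12 : (G.deleteEdges {s(u, v)}).Reachable a1 a2 := reach_of_not_mem_edges p12 he12
  have hr34 : (G.deleteEdges {s(u, v)}).Reachable a3 a4 := reach_of_not_mem_edges p34 he34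
  have hmemsub : s(u, v) ∈ subtreeEdges G {a1, a2, a3, a4} := by
    unfold subtreeEdges
    rw [Finset.mem_filter]
    exact ⟨mem_edgeFinset.mpr he0set, a1, by simp, a3, by simp, p13, hp13, he13⟩
  obtain ⟨vs, hvsmem, hvscard⟩ := hsmall _ hmemsub
  have hcards : (leafSide G X u s(u, v)).card + (leafSide G X v s(u, v)).card = X.card := by
    unfold leafSide
    rw [show X.filter (fun x => (G.deleteEdges {s(u, v)}).Reachable v x)
        = X.filter (fun x => ¬ (G.deleteEdges {s(u, v)}).Reachable u x) from
      Finset.filter_congr fun x _ => reach_delete_v_iff hT hadj x]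
    exact Finset.card_filter_add_card_filter_not _
  have hbig : ∃ b bc : V, s(b, bc) = s(u, v) ∧ m ≤ (leafSide G X b s(u, v)).card := by
    rcases Sym2.mem_iff.mp hvsmem with h | h
    · exact ⟨v, u, Sym2.eq_swap, by rw [h] at hvscard; omega⟩
    · exact ⟨u, v, rfl, by rw [h] at hvscard; omega⟩
  obtain ⟨b, bc, hbc, hbcard⟩ := hbig
  have hadj' : G.Adj b bc := G.mem_edgeSet.mp (by rw [hbc]; exact he0set)
  have hside_or : ∀ x, (G.deleteEdges {s(u, v)}).Reachable b x ∨
      (G.deleteEdges {s(u, v)}).Reachable bc x := fun x => by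
    have := reach_delete_endpoint hpc b bc x
    rwa [hbc] at this
  have hside_not : ∀ x, (G.deleteEdges {s(u, v)}).Reachable bc x ↔
      ¬ (G.deleteEdges {s(u, v)}).Reachable b x := fun x => by
    have := reach_delete_v_iff hT hadj' x
    rwa [hbc] at this
  have hwpos : 0 < w s(u, v) := hw _ he0set
  -- the strict witness
  have hmain : ∃ Z₀ ∈ (X \ {a1, a2, a3, a4}).powersetCard (m - 2),
      subtreeWeight G w (insert a1 (insert a2 Z₀)) + subtreeWeight G w (insert a3 (insert a4 Z₀))
      < subtreeWeight G w (insert a1 (insert a3 Z₀))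
        + subtreeWeight G w (insert a2 (insert a4 Z₀)) := by
    rcases hside_or a1 with hb1 | hc1
    · -- a1, a2 on the big side `b`
      have hb2 : (G.deleteEdges {s(u, v)}).Reachable b a2 := hb1.trans hr12
      have hnb3 : ¬ (G.deleteEdges {s(u, v)}).Reachable b a3 :=
        fun h => hsep13 (hb1.symm.trans h)
      have hnb4 : ¬ (G.deleteEdges {s(u, v)}).Reachable b a4 :=
        fun h => hsep13 (hb1.symm.trans (h.trans hr34.symm))
      have h1mem : a1 ∈ leafSide G X b s(u, v) := by
        unfold leafSide; rw [Finset.mem_filter]; exact ⟨h1, hb1⟩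
      have h2mem : a2 ∈ (leafSide G X b s(u, v)).erase a1 := by
        rw [Finset.mem_erase]
        refine ⟨Ne.symm h12, ?_⟩
        unfold leafSide; rw [Finset.mem_filter]; exact ⟨h2, hb2⟩
      have hpc2 : m - 2 ≤ (((leafSide G X b s(u, v)).erase a1).erase a2).card := by
        have e1 := Finset.card_erase_of_mem h1mem
        have e2 := Finset.card_erase_of_mem h2mem
        omega
      obtain ⟨Z₀, hZsub, hZcard⟩ := Finset.exists_subset_card_eq hpc2
      have hZside : ∀ z ∈ Z₀, (G.deleteEdges {s(u, v)}).Reachable b z := by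
        intro z hz
        have hz' := Finset.mem_of_mem_erase (Finset.mem_of_mem_erase (hZsub hz))
        unfold leafSide at hz'
        exact (Finset.mem_filter.mp hz').2
      have hZX : Z₀ ∈ (X \ {a1, a2, a3, a4}).powersetCard (m - 2) := by
        rw [Finset.mem_powersetCard]
        refine ⟨fun z hz => ?_, hZcard⟩
        have hz' := hZsub hz
        rw [Finset.mem_erase] at hz'
        obtain ⟨hz2, hz'⟩ := hz'
        rw [Finset.mem_erase] at hz'
        obtain ⟨hz1, hz'⟩ := hz'
        unfold leafSide at hz'
        rw [Finset.mem_filter] at hz'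
        rw [Finset.mem_sdiff]
        refine ⟨hz'.1, ?_⟩
        simp only [Finset.mem_insert, Finset.mem_singleton]
        push_neg
        exact ⟨hz1, hz2, fun h => hnb3 (h ▸ hz'.2), fun h => hnb4 (h ▸ hz'.2)⟩
      refine ⟨Z₀, hZX, ?_⟩
      rw [hD, hD, hD, hD, ← Finset.sum_add_distrib, ← Finset.sum_add_distrib]
      refine Finset.sum_lt_sum (fun e he => hedge_le Z₀ e he)
        ⟨s(u, v), mem_edgeFinset.mpr he0set, ?_⟩
      rw [← hbc]
      simp only [pred_iff hT hadj']
      simp only [Finset.exists_mem_insert,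
        fun x => (by rw [hbc]; exact hside_not x :
          (G.deleteEdges {s(b, bc)}).Reachable bc x ↔
            ¬ (G.deleteEdges {s(b, bc)}).Reachable b x)]
      rw [hbc]
      have hn12 : ¬ (((G.deleteEdges {s(u, v)}).Reachable b a1 ∨
            (G.deleteEdges {s(u, v)}).Reachable b a2 ∨
            ∃ z ∈ Z₀, (G.deleteEdges {s(u, v)}).Reachable b z) ∧
          (¬ (G.deleteEdges {s(u, v)}).Reachable b a1 ∨
            ¬ (G.deleteEdges {s(u, v)}).Reachable b a2 ∨
            ∃ z ∈ Z₀, ¬ (G.deleteEdges {s(u, v)}).Reachable b z)) := by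
        rintro ⟨-, h' | h' | ⟨z, hz, h'⟩⟩
        · exact h' hb1
        · exact h' hb2
        · exact h' (hZside z hz)
      have hp13' : (((G.deleteEdges {s(u, v)}).Reachable b a1 ∨
            (G.deleteEdges {s(u, v)}).Reachable b a3 ∨
            ∃ z ∈ Z₀, (G.deleteEdges {s(u, v)}).Reachable b z) ∧
          (¬ (G.deleteEdges {s(u, v)}).Reachable b a1 ∨
            ¬ (G.deleteEdges {s(u, v)}).Reachable b a3 ∨
            ∃ z ∈ Z₀, ¬ (G.deleteEdges {s(u, v)}).Reachable b z)) :=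
        ⟨Or.inl hb1, Or.inr (Or.inl hnb3)⟩
      have hp24' : (((G.deleteEdges {s(u, v)}).Reachable b a2 ∨
            (G.deleteEdges {s(u, v)}).Reachable b a4 ∨
            ∃ z ∈ Z₀, (G.deleteEdges {s(u, v)}).Reachable b z) ∧
          (¬ (G.deleteEdges {s(u, v)}).Reachable b a2 ∨
            ¬ (G.deleteEdges {s(u, v)}).Reachable b a4 ∨
            ∃ z ∈ Z₀, ¬ (G.deleteEdges {s(u, v)}).Reachable b z)) :=
        ⟨Or.inl hb2, Or.inr (Or.inl hnb4)⟩
      rw [if_neg hn12, if_pos hp13', if_pos hp24']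
      split_ifs <;> linarith
    · -- a1, a2 on the side `bc`, hence a3, a4 on the big side `b`
      have hb3 : (G.deleteEdges {s(u, v)}).Reachable b a3 := by
        rcases hside_or a3 with h | h
        · exact h
        · exact absurd (hc1.symm.trans h) hsep13
      have hb4 : (G.deleteEdges {s(u, v)}).Reachable b a4 := hb3.trans hr34
      have hnb1 : ¬ (G.deleteEdges {s(u, v)}).Reachable b a1 := (hside_not a1).mp hc1
      have hnb2 : ¬ (G.deleteEdges {s(u, v)}).Reachable b a2 :=
        fun h => hnb1 (h.trans hr12.symm)
      have h3mem : a3 ∈ leafSide G X b s(u, v) := by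
        unfold leafSide; rw [Finset.mem_filter]; exact ⟨h3, hb3⟩
      have h4mem : a4 ∈ (leafSide G X b s(u, v)).erase a3 := by
        rw [Finset.mem_erase]
        refine ⟨Ne.symm h34, ?_⟩
        unfold leafSide; rw [Finset.mem_filter]; exact ⟨h4, hb4⟩
      have hpc2 : m - 2 ≤ (((leafSide G X b s(u, v)).erase a3).erase a4).card := by
        have e1 := Finset.card_erase_of_mem h3mem
        have e2 := Finset.card_erase_of_mem h4mem
        omega
      obtain ⟨Z₀, hZsub, hZcard⟩ := Finset.exists_subset_card_eq hpc2
      have hZside : ∀ z ∈ Z₀, (G.deleteEdges {s(u, v)}).Reachable b z := by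
        intro z hz
        have hz' := Finset.mem_of_mem_erase (Finset.mem_of_mem_erase (hZsub hz))
        unfold leafSide at hz'
        exact (Finset.mem_filter.mp hz').2
      have hZX : Z₀ ∈ (X \ {a1, a2, a3, a4}).powersetCard (m - 2) := by
        rw [Finset.mem_powersetCard]
        refine ⟨fun z hz => ?_, hZcard⟩
        have hz' := hZsub hz
        rw [Finset.mem_erase] at hz'
        obtain ⟨hz4, hz'⟩ := hz'
        rw [Finset.mem_erase] at hz'
        obtain ⟨hz3, hz'⟩ := hz'
        unfold leafSide at hz'
        rw [Finset.mem_filter] at hz'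
        rw [Finset.mem_sdiff]
        refine ⟨hz'.1, ?_⟩
        simp only [Finset.mem_insert, Finset.mem_singleton]
        push_neg
        exact ⟨fun h => hnb1 (h ▸ hz'.2), fun h => hnb2 (h ▸ hz'.2), hz3, hz4⟩
      refine ⟨Z₀, hZX, ?_⟩
      rw [hD, hD, hD, hD, ← Finset.sum_add_distrib, ← Finset.sum_add_distrib]
      refine Finset.sum_lt_sum (fun e he => hedge_le Z₀ e he)
        ⟨s(u, v), mem_edgeFinset.mpr he0set, ?_⟩
      rw [← hbc]
      simp only [pred_iff hT hadj']
      simp only [Finset.exists_mem_insert,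
        fun x => (by rw [hbc]; exact hside_not x :
          (G.deleteEdges {s(b, bc)}).Reachable bc x ↔
            ¬ (G.deleteEdges {s(b, bc)}).Reachable b x)]
      rw [hbc]
      have hn34 : ¬ (((G.deleteEdges {s(u, v)}).Reachable b a3 ∨
            (G.deleteEdges {s(u, v)}).Reachable b a4 ∨
            ∃ z ∈ Z₀, (G.deleteEdges {s(u, v)}).Reachable b z) ∧
          (¬ (G.deleteEdges {s(u, v)}).Reachable b a3 ∨
            ¬ (G.deleteEdges {s(u, v)}).Reachable b a4 ∨
            ∃ z ∈ Z₀, ¬ (G.deleteEdges {s(u, v)}).Reachable b z)) := by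
        rintro ⟨-, h' | h' | ⟨z, hz, h'⟩⟩
        · exact h' hb3
        · exact h' hb4
        · exact h' (hZside z hz)
      have hp13' : (((G.deleteEdges {s(u, v)}).Reachable b a1 ∨
            (G.deleteEdges {s(u, v)}).Reachable b a3 ∨
            ∃ z ∈ Z₀, (G.deleteEdges {s(u, v)}).Reachable b z) ∧
          (¬ (G.deleteEdges {s(u, v)}).Reachable b a1 ∨
            ¬ (G.deleteEdges {s(u, v)}).Reachable b a3 ∨
            ∃ z ∈ Z₀, ¬ (G.deleteEdges {s(u, v)}).Reachable b z)) :=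
        ⟨Or.inr (Or.inl hb3), Or.inl hnb1⟩
      have hp24' : (((G.deleteEdges {s(u, v)}).Reachable b a2 ∨
            (G.deleteEdges {s(u, v)}).Reachable b a4 ∨
            ∃ z ∈ Z₀, (G.deleteEdges {s(u, v)}).Reachable b z) ∧
          (¬ (G.deleteEdges {s(u, v)}).Reachable b a2 ∨
            ¬ (G.deleteEdges {s(u, v)}).Reachable b a4 ∨
            ∃ z ∈ Z₀, ¬ (G.deleteEdges {s(u, v)}).Reachable b z)) :=
        ⟨Or.inr (Or.inl hb4), Or.inl hnb2⟩
      rw [if_neg hn34, if_pos hp13', if_pos hp24']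
      split_ifs <;> linarith
  -- outer algebra
  rw [SDmap_eq G w X m hm h1 h2 h12, SDmap_eq G w X m hm h3 h4 h34,
    SDmap_eq G w X m hm h1 h3 h13, SDmap_eq G w X m hm h2 h4 h24]
  have E13 : ∑ R ∈ (X.powersetCard m).filter (fun R => a1 ∈ R ∧ a3 ∈ R ∧ a2 ∉ R ∧ a4 ∉ R),
        subtreeWeight G w R
      = ∑ Z ∈ (X \ {a1, a2, a3, a4}).powersetCard (m - 2),
        subtreeWeight G w (insert a1 (insert a3 Z)) := by
    rw [sum_trace_reindex (subtreeWeight G w) X m hm h1 h3 h13 (Ne.symm h12) h23 (Ne.symm h14)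
      (Ne.symm h34)]
    have hset : (X \ {a1, a3, a2, a4}) = (X \ {a1, a2, a3, a4}) := by
      ext z
      simp only [Finset.mem_sdiff, Finset.mem_insert, Finset.mem_singleton]
      tauto
    rw [hset]
  have E24 : ∑ R ∈ (X.powersetCard m).filter (fun R => a2 ∈ R ∧ a4 ∈ R ∧ a1 ∉ R ∧ a3 ∉ R),
        subtreeWeight G w R
      = ∑ Z ∈ (X \ {a1, a2, a3, a4}).powersetCard (m - 2),
        subtreeWeight G w (insert a2 (insert a4 Z)) := by
    rw [sum_trace_reindex (subtreeWeight G w) X m hm h2 h4 h24 h12 h14 (Ne.symm h23) h34]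
    have hset : (X \ {a2, a4, a1, a3}) = (X \ {a1, a2, a3, a4}) := by
      ext z
      simp only [Finset.mem_sdiff, Finset.mem_insert, Finset.mem_singleton]
      tauto
    rw [hset]
  have E12 : ∑ R ∈ (X.powersetCard m).filter (fun R => a1 ∈ R ∧ a2 ∈ R ∧ a3 ∉ R ∧ a4 ∉ R),
        subtreeWeight G w R
      = ∑ Z ∈ (X \ {a1, a2, a3, a4}).powersetCard (m - 2),
        subtreeWeight G w (insert a1 (insert a2 Z)) := by
    rw [sum_trace_reindex (subtreeWeight G w) X m hm h1 h2 h12 (Ne.symm h13) (Ne.symm h23)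
      (Ne.symm h14) (Ne.symm h24)]
  have E34 : ∑ R ∈ (X.powersetCard m).filter (fun R => a3 ∈ R ∧ a4 ∈ R ∧ a1 ∉ R ∧ a2 ∉ R),
        subtreeWeight G w R
      = ∑ Z ∈ (X \ {a1, a2, a3, a4}).powersetCard (m - 2),
        subtreeWeight G w (insert a3 (insert a4 Z)) := by
    rw [sum_trace_reindex (subtreeWeight G w) X m hm h3 h4 h34 h13 h14 h23 h24]
    have hset : (X \ {a3, a4, a1, a2}) = (X \ {a1, a2, a3, a4}) := by
      ext z
      simp only [Finset.mem_sdiff, Finset.mem_insert, Finset.mem_singleton]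
      tauto
    rw [hset]
  have key : (∑ R ∈ (X.powersetCard m).filter (fun R => a1 ∈ R ∧ a3 ∈ R), subtreeWeight G w R)
        + (∑ R ∈ (X.powersetCard m).filter (fun R => a2 ∈ R ∧ a4 ∈ R), subtreeWeight G w R)
        - (∑ R ∈ (X.powersetCard m).filter (fun R => a1 ∈ R ∧ a2 ∈ R), subtreeWeight G w R)
        - (∑ R ∈ (X.powersetCard m).filter (fun R => a3 ∈ R ∧ a4 ∈ R), subtreeWeight G w R)
      = (∑ R ∈ (X.powersetCard m).filter (fun R => a1 ∈ R ∧ a3 ∈ R ∧ a2 ∉ R ∧ a4 ∉ R),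
          subtreeWeight G w R)
        + (∑ R ∈ (X.powersetCard m).filter (fun R => a2 ∈ R ∧ a4 ∈ R ∧ a1 ∉ R ∧ a3 ∉ R),
          subtreeWeight G w R)
        - (∑ R ∈ (X.powersetCard m).filter (fun R => a1 ∈ R ∧ a2 ∈ R ∧ a3 ∉ R ∧ a4 ∉ R),
          subtreeWeight G w R)
        - (∑ R ∈ (X.powersetCard m).filter (fun R => a3 ∈ R ∧ a4 ∈ R ∧ a1 ∉ R ∧ a2 ∉ R),
          subtreeWeight G w R) := by
    rw [Finset.sum_filter, Finset.sum_filter, Finset.sum_filter, Finset.sum_filter,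
      Finset.sum_filter, Finset.sum_filter, Finset.sum_filter, Finset.sum_filter]
    simp only [← Finset.sum_add_distrib, ← Finset.sum_sub_distrib]
    exact Finset.sum_congr rfl fun R _ =>
      indicator_split (subtreeWeight G w R) (a1 ∈ R) (a2 ∈ R) (a3 ∈ R) (a4 ∈ R)
  obtain ⟨Z₀, hZ₀mem, hZ₀lt⟩ := hmain
  have hpos : 0 < ∑ Z ∈ (X \ {a1, a2, a3, a4}).powersetCard (m - 2),
      (subtreeWeight G w (insert a1 (insert a3 Z)) + subtreeWeight G w (insert a2 (insert a4 Z))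
        - subtreeWeight G w (insert a1 (insert a2 Z))
        - subtreeWeight G w (insert a3 (insert a4 Z))) := by
    refine Finset.sum_pos' (fun Z _ => by have := hZle Z; linarith) ⟨Z₀, hZ₀mem, by linarith⟩
  have hsum_split : ∑ Z ∈ (X \ {a1, a2, a3, a4}).powersetCard (m - 2),
      (subtreeWeight G w (insert a1 (insert a3 Z)) + subtreeWeight G w (insert a2 (insert a4 Z))
        - subtreeWeight G w (insert a1 (insert a2 Z))
        - subtreeWeight G w (insert a3 (insert a4 Z)))
      = (∑ Z ∈ (X \ {a1, a2, a3, a4}).powersetCard (m - 2),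
          subtreeWeight G w (insert a1 (insert a3 Z)))
        + (∑ Z ∈ (X \ {a1, a2, a3, a4}).powersetCard (m - 2),
          subtreeWeight G w (insert a2 (insert a4 Z)))
        - (∑ Z ∈ (X \ {a1, a2, a3, a4}).powersetCard (m - 2),
          subtreeWeight G w (insert a1 (insert a2 Z)))
        - (∑ Z ∈ (X \ {a1, a2, a3, a4}).powersetCard (m - 2),
          subtreeWeight G w (insert a3 (insert a4 Z))) := by
    rw [Finset.sum_sub_distrib, Finset.sum_sub_distrib, Finset.sum_add_distrib]
  linarith [key, hpos, hsum_split, E12, E34, E13, E24]
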